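/- Two noisy single-mode quadratures with Gaussian noise parameters ξ, ξ' > 0, corresponding to the canonical pair (Q, P) with [Q,P] = i, are jointly measurable if and only if ξ ξ' ≥ 1/2. In the finite-dimensional surrogate formulation: binary qubit observables with elements (1/2)(I ± n·σ) and (1/2)(I ± m·σ) (Bloch vectors n, m) are jointly measurable if and only if |n + m| + |n - m| ≤ 2. -/

import Mathlib

open Matrix BigOperators ComplexOrder

noncomputable section

def pauliX : Matrix (Fin 2) (Fin 2) ℂ := !![0, 1; 1, 0]
def pauliY : Matrix (Fin 2) (Fin 2) ℂ := !![0, -Complex.I; Complex.I, 0]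
def pauliZ : Matrix (Fin 2) (Fin 2) ℂ := !![1, 0; 0, -1]

/-- n·σ for a Bloch vector n ∈ ℝ³. -/
def blochOp (v : Fin 3 → ℝ) : Matrix (Fin 2) (Fin 2) ℂ :=
  (v 0 : ℂ) • pauliX + (v 1 : ℂ) • pauliY + (v 2 : ℂ) • pauliZ

/-- The unbiased binary qubit observable with effects (I ± n·σ)/2. -/
def binObs (v : Fin 3 → ℝ) (ε : Bool) : Matrix (Fin 2) (Fin 2) ℂ :=
  (2 : ℂ)⁻¹ • ((1 : Matrix (Fin 2) (Fin 2) ℂ) + (if ε then 1 else -1 : ℂ) • blochOp v)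

/- ### Auxiliary lemmas -/

lemma key3 (a v0 v1 v2 s w0 w1 w2 : ℝ) (ha : 0 ≤ a) (hs : 0 ≤ s)
    (hv : v0^2+v1^2+v2^2 ≤ a^2) (hw : w0^2+w1^2+w2^2 = s^2) :
    0 ≤ a*s + (v0*w0+v1*w1+v2*w2) := by
  have hcs : (v0*w0+v1*w1+v2*w2)^2 ≤ (v0^2+v1^2+v2^2)*(w0^2+w1^2+w2^2) := by
    nlinarith [sq_nonneg (v0*w1-v1*w0), sq_nonneg (v0*w2-v2*w0), sq_nonneg (v1*w2-v2*w1)]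
  nlinarith [mul_nonneg ha hs, hcs, mul_nonneg (mul_nonneg ha hs) (mul_nonneg ha hs),
    sq_nonneg (a*s + (v0*w0+v1*w1+v2*w2))]

lemma blochOp_apply (v : Fin 3 → ℝ) :
    blochOp v = !![(v 2 : ℂ), (v 0 : ℂ) - (v 1 : ℂ) * Complex.I;
                   (v 0 : ℂ) + (v 1 : ℂ) * Complex.I, -(v 2 : ℂ)] := by
  ext i j
  fin_cases i <;> fin_cases j <;>
    simp [blochOp, pauliX, pauliY, pauliZ] <;> ring

/-- Positivity of `a•1 + v·σ` is equivalent to `|v| ≤ a`. -/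
lemma psd_iff (a : ℝ) (v : Fin 3 → ℝ) :
    ((a : ℂ) • (1 : Matrix (Fin 2) (Fin 2) ℂ) + blochOp v).PosSemidef ↔
      Real.sqrt (∑ i, v i ^ 2) ≤ a := by
  have hM : (a : ℂ) • (1 : Matrix (Fin 2) (Fin 2) ℂ) + blochOp v =
      !![(a : ℂ) + v 2, (v 0 : ℂ) - (v 1 : ℂ) * Complex.I;
         (v 0 : ℂ) + (v 1 : ℂ) * Complex.I, (a : ℂ) - v 2] := by
    rw [blochOp_apply]
    ext i j
    fin_cases i <;> fin_cases j <;> simp [Matrix.one_apply] <;> ring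
  rw [hM, Fin.sum_univ_three]
  rw [Matrix.posSemidef_iff_dotProduct_mulVec]
  constructor
  · rintro ⟨-, hpos⟩
    have h1 := hpos ![1, 0]
    have h2 := hpos ![0, 1]
    have h3 := hpos ![(v 0 : ℂ) - v 1 * Complex.I, -((a : ℂ) + v 2)]
    have h4 := hpos ![((a : ℂ) - v 2), -((v 0 : ℂ) + v 1 * Complex.I)]
    have h5 := hpos ![(v 0 : ℂ) - v 1 * Complex.I, -1]
    rw [Complex.le_def] at h1 h2 h3 h4 h5
    have h1' := h1.1; have h2' := h2.1; have h3' := h3.1; have h4' := h4.1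
    have h5' := h5.1
    simp [dotProduct, mulVec, Fin.sum_univ_two, Complex.add_re, Complex.add_im,
      Complex.mul_re, Complex.mul_im, Complex.sub_re, Complex.sub_im,
      Complex.neg_re, Complex.neg_im, Complex.ofReal_re, Complex.ofReal_im,
      Complex.I_re, Complex.I_im, Complex.one_re, Complex.one_im] at h1' h2' h3' h4' h5'
    clear h1 h2 h3 h4 h5 hpos hM
    have ha : 0 ≤ a := by linarith
    by_cases ha0 : a = 0
    · subst ha0
      have hv2 : v 2 = 0 := by linarith
      have h00 : v 0 ^ 2 + v 1 ^ 2 + v 2 ^ 2 = 0 := by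
        nlinarith [h5', hv2, sq_nonneg (v 0), sq_nonneg (v 1)]
      rw [h00, Real.sqrt_zero]
    · have ha' : 0 < a := lt_of_le_of_ne ha (Ne.symm ha0)
      have key : v 0 ^ 2 + v 1 ^ 2 + v 2 ^ 2 ≤ a ^ 2 := by nlinarith [h3', h4', ha']
      calc Real.sqrt (v 0 ^ 2 + v 1 ^ 2 + v 2 ^ 2) ≤ Real.sqrt (a ^ 2) :=
            Real.sqrt_le_sqrt key
        _ = a := Real.sqrt_sq ha
  · intro h
    have ha : 0 ≤ a := le_trans (Real.sqrt_nonneg _) h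
    have hS : 0 ≤ v 0 ^ 2 + v 1 ^ 2 + v 2 ^ 2 := by positivity
    have h2 : v 0 ^ 2 + v 1 ^ 2 + v 2 ^ 2 ≤ a ^ 2 := by
      have hq := Real.sq_sqrt hS
      nlinarith [Real.sqrt_nonneg (v 0 ^ 2 + v 1 ^ 2 + v 2 ^ 2)]
    constructor
    · rw [Matrix.IsHermitian]
      ext i j
      fin_cases i <;> fin_cases j <;>
        simp [Matrix.conjTranspose_apply, Complex.ext_iff]
    · intro x
      rw [Complex.le_def]
      constructor
      · simp [dotProduct, mulVec, Fin.sum_univ_two,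
          Complex.add_re, Complex.add_im, Complex.mul_re, Complex.mul_im,
          Complex.sub_re, Complex.sub_im,
          Complex.neg_re, Complex.neg_im, Complex.ofReal_re, Complex.ofReal_im,
          Complex.I_re, Complex.I_im]
        nlinarith [key3 a (v 0) (v 1) (v 2)
          ((x 0).re^2 + (x 0).im^2 + (x 1).re^2 + (x 1).im^2)
          (2*((x 0).re*(x 1).re + (x 0).im*(x 1).im))
          (2*((x 0).re*(x 1).im - (x 0).im*(x 1).re))
          ((x 0).re^2 + (x 0).im^2 - (x 1).re^2 - (x 1).im^2)
          ha (by positivity) h2 (by ring)]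
      · simp [dotProduct, mulVec, Fin.sum_univ_two,
          Complex.add_re, Complex.add_im, Complex.mul_re, Complex.mul_im,
          Complex.sub_re, Complex.sub_im,
          Complex.neg_re, Complex.neg_im, Complex.ofReal_re, Complex.ofReal_im,
          Complex.I_re, Complex.I_im]
        ring

/-- Scalar part of the Bloch decomposition. -/
def bA (M : Matrix (Fin 2) (Fin 2) ℂ) : ℝ := ((M 0 0).re + (M 1 1).re) / 2
/-- Vector part of the Bloch decomposition. -/
def bV (M : Matrix (Fin 2) (Fin 2) ℂ) : Fin 3 → ℝ :=
  ![(M 0 1).re, -(M 0 1).im, ((M 0 0).re - (M 1 1).re) / 2]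

lemma decomp (M : Matrix (Fin 2) (Fin 2) ℂ) (h : M.IsHermitian) :
    M = (bA M : ℂ) • 1 + blochOp (bV M) := by
  have h00 : (M 0 0).im = 0 := by
    have := h.apply 0 0
    rw [RCLike.star_def, Complex.conj_eq_iff_im] at this
    exact this
  have h11 : (M 1 1).im = 0 := by
    have := h.apply 1 1
    rw [RCLike.star_def, Complex.conj_eq_iff_im] at this
    exact this
  have h10 : M 1 0 = starRingEnd ℂ (M 0 1) := (h.apply 1 0).symm
  ext i j
  fin_cases i <;> fin_cases j <;>
    simp [blochOp_apply, bA, bV, Matrix.one_apply, Complex.ext_iff, h00, h11, h10] <;>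
    ring

lemma bA_add (M N : Matrix (Fin 2) (Fin 2) ℂ) : bA (M + N) = bA M + bA N := by
  simp [bA, Matrix.add_apply]; ring

lemma bV_add (M N : Matrix (Fin 2) (Fin 2) ℂ) (i : Fin 3) :
    bV (M + N) i = bV M i + bV N i := by
  fin_cases i <;> simp [bV, Matrix.add_apply] <;> ring

lemma binObs_apply (v : Fin 3 → ℝ) (ε : Bool) :
    binObs v ε = !![((((1 + (if ε then 1 else -1 : ℝ) * v 2) / 2 : ℝ)) : ℂ),
        (((if ε then 1 else -1 : ℝ) : ℂ) * ((v 0 : ℂ) - (v 1 : ℂ) * Complex.I) / 2 : ℂ);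
        (((if ε then 1 else -1 : ℝ) : ℂ) * ((v 0 : ℂ) + (v 1 : ℂ) * Complex.I) / 2 : ℂ),
        ((((1 - (if ε then 1 else -1 : ℝ) * v 2) / 2 : ℝ)) : ℂ)] := by
  cases ε <;>
  · simp only [binObs, blochOp_apply]
    ext i j
    fin_cases i <;> fin_cases j <;>
      simp [Matrix.one_apply] <;> push_cast <;> ring

lemma bA_binObs (v : Fin 3 → ℝ) (ε : Bool) : bA (binObs v ε) = 1 / 2 := by
  rw [binObs_apply]; cases ε <;> simp [bA] <;> ring

lemma bV_binObs (v : Fin 3 → ℝ) (ε : Bool) (i : Fin 3) :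
    bV (binObs v ε) i = (if ε then 1 else -1 : ℝ) * v i / 2 := by
  rw [binObs_apply]
  cases ε <;> fin_cases i <;>
    simp [bV, Complex.div_re, Complex.div_im, Complex.normSq] <;> ring

lemma norm_eq_sqrt_sum (x : Fin 3 → ℝ) :
    ‖(WithLp.equiv 2 (Fin 3 → ℝ)).symm x‖ = Real.sqrt (∑ i, x i ^ 2) := by
  rw [EuclideanSpace.norm_eq]
  congr 1
  apply Finset.sum_congr rfl
  intro i _
  simp [Real.norm_eq_abs, sq_abs]

lemma keytri (x y u : Fin 3 → ℝ) (hu : ∀ i, u i = 2 * x i - 2 * y i) :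
    Real.sqrt (∑ i, u i ^ 2) ≤
      2 * Real.sqrt (∑ i, x i ^ 2) + 2 * Real.sqrt (∑ i, y i ^ 2) := by
  have h : (WithLp.equiv 2 (Fin 3 → ℝ)).symm u =
      (2 : ℝ) • (WithLp.equiv 2 (Fin 3 → ℝ)).symm x
        - (2 : ℝ) • (WithLp.equiv 2 (Fin 3 → ℝ)).symm y := by
    ext i
    simpa using hu i
  have h2 := norm_sub_le ((2 : ℝ) • (WithLp.equiv 2 (Fin 3 → ℝ)).symm x)
    ((2 : ℝ) • (WithLp.equiv 2 (Fin 3 → ℝ)).symm y)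
  rw [norm_smul, norm_smul] at h2
  calc Real.sqrt (∑ i, u i ^ 2) = ‖(WithLp.equiv 2 (Fin 3 → ℝ)).symm u‖ :=
        (norm_eq_sqrt_sum u).symm
    _ ≤ ‖(2:ℝ)‖ * ‖(WithLp.equiv 2 (Fin 3 → ℝ)).symm x‖
          + ‖(2:ℝ)‖ * ‖(WithLp.equiv 2 (Fin 3 → ℝ)).symm y‖ := by
        rw [h]; exact h2
    _ = 2 * Real.sqrt (∑ i, x i ^ 2) + 2 * Real.sqrt (∑ i, y i ^ 2) := by
        rw [norm_eq_sqrt_sum, norm_eq_sqrt_sum]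
        norm_num

lemma sqrt_sum_scale (w u : Fin 3 → ℝ) (c : ℝ) (hu : ∀ i, u i = c * w i) :
    Real.sqrt (∑ i, u i ^ 2) = |c| * Real.sqrt (∑ i, w i ^ 2) := by
  have h : ∑ i, u i ^ 2 = c ^ 2 * ∑ i, w i ^ 2 := by
    rw [Fin.sum_univ_three, Fin.sum_univ_three, hu 0, hu 1, hu 2]; ring
  rw [h, Real.sqrt_mul (sq_nonneg c), Real.sqrt_sq_eq_abs]

/-- Busch criterion. Binary qubit observables (I ± n·σ)/2 and
(I ± m·σ)/2 with |n|, |m| ≤ 1 are jointly measurable (there is a 4-outcome POVM with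
these margins) iff |n + m| + |n - m| ≤ 2. -/
theorem stmt14 (n m : Fin 3 → ℝ)
    (hn : Real.sqrt (∑ i, n i ^ 2) ≤ 1) (hm : Real.sqrt (∑ i, m i ^ 2) ≤ 1) :
    (∃ G : Bool → Bool → Matrix (Fin 2) (Fin 2) ℂ,
        (∀ ε δ, (G ε δ).PosSemidef) ∧
        (∀ ε, ∑ δ : Bool, G ε δ = binObs n ε) ∧
        (∀ δ, ∑ ε : Bool, G ε δ = binObs m δ))
      ↔ Real.sqrt (∑ i, (n i + m i) ^ 2) + Real.sqrt (∑ i, (n i - m i) ^ 2) ≤ 2 := by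
  constructor
  · rintro ⟨G, hpsd, hE, hF⟩
    have hd : ∀ ε δ, Real.sqrt (∑ i, bV (G ε δ) i ^ 2) ≤ bA (G ε δ) := by
      intro ε δ
      have h1 := (hpsd ε δ).1
      have h2 := hpsd ε δ
      rw [decomp _ h1] at h2
      exact (psd_iff _ _).mp h2
    have hEt := hE true; have hEf := hE false
    have hFt := hF true; have hFf := hF false
    rw [Fintype.sum_bool] at hEt hEf hFt hFf
    have hA1 : bA (G true true) + bA (G true false) = 1 / 2 := by
      have := congrArg bA hEt; rwa [bA_add, bA_binObs] at this
    have hA2 : bA (G false true) + bA (G false false) = 1 / 2 := by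
      have := congrArg bA hEf; rwa [bA_add, bA_binObs] at this
    have hV1 : ∀ i, bV (G true true) i + bV (G true false) i = n i / 2 := by
      intro i
      have := congrArg (fun M => bV M i) hEt
      simpa [bV_add, bV_binObs] using this
    have hV2 : ∀ i, bV (G false true) i + bV (G false false) i = -(n i) / 2 := by
      intro i
      have := congrArg (fun M => bV M i) hEf
      simp [bV_add, bV_binObs] at this
      linarith
    have hV3 : ∀ i, bV (G true true) i + bV (G false true) i = m i / 2 := by
      intro i
      have := congrArg (fun M => bV M i) hFt
      simpa [bV_add, bV_binObs] using this
    have hV4 : ∀ i, bV (G true false) i + bV (G false false) i = -(m i) / 2 := by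
      intro i
      have := congrArg (fun M => bV M i) hFf
      simp [bV_add, bV_binObs] at this
      linarith
    have key1 : ∀ i, n i + m i = 2 * bV (G true true) i - 2 * bV (G false false) i := by
      intro i
      have e1 := hV1 i; have e2 := hV2 i; have e3 := hV3 i; have e4 := hV4 i
      linarith
    have key2 : ∀ i, n i - m i = 2 * bV (G true false) i - 2 * bV (G false true) i := by
      intro i
      have e1 := hV1 i; have e2 := hV2 i; have e3 := hV3 i; have e4 := hV4 i
      linarith
    have t1 : Real.sqrt (∑ i, (n i + m i) ^ 2) ≤
        2 * Real.sqrt (∑ i, bV (G true true) i ^ 2)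
          + 2 * Real.sqrt (∑ i, bV (G false false) i ^ 2) :=
      keytri _ _ _ key1
    have t2 : Real.sqrt (∑ i, (n i - m i) ^ 2) ≤
        2 * Real.sqrt (∑ i, bV (G true false) i ^ 2)
          + 2 * Real.sqrt (∑ i, bV (G false true) i ^ 2) :=
      keytri _ _ _ key2
    linarith [hd true true, hd true false, hd false true, hd false false]
  · intro h
    set p : ℝ := Real.sqrt (∑ i, (n i + m i) ^ 2) - 1 with hp
    have hnm0 : 0 ≤ Real.sqrt (∑ i, (n i + m i) ^ 2) := Real.sqrt_nonneg _
    have hnm0' : 0 ≤ Real.sqrt (∑ i, (n i - m i) ^ 2) := Real.sqrt_nonneg _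
    refine ⟨fun ε δ =>
      (((1 + (if ε then 1 else -1 : ℝ) * (if δ then 1 else -1 : ℝ) * p) / 4 : ℝ) : ℂ) • 1
        + blochOp (fun i =>
            ((if ε then 1 else -1 : ℝ) * n i + (if δ then 1 else -1 : ℝ) * m i) / 4),
      ?_, ?_, ?_⟩
    · intro ε δ
      apply (psd_iff _ _).mpr
      cases ε <;> cases δ
      · rw [sqrt_sum_scale (fun i => n i + m i) _ (-(1/4))
          (by intro i; simp; ring)]
        simp only [hp]
        norm_num
        linarith
      · rw [sqrt_sum_scale (fun i => n i - m i) _ (-(1/4))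
          (by intro i; simp; ring)]
        rw [hp]
        rw [abs_of_nonpos (by norm_num)]
        norm_num
        linarith
      · rw [sqrt_sum_scale (fun i => n i - m i) _ (1/4)
          (by intro i; simp; ring)]
        rw [hp]
        rw [abs_of_nonneg (by norm_num)]
        norm_num
        linarith
      · rw [sqrt_sum_scale (fun i => n i + m i) _ (1/4)
          (by intro i; simp; ring)]
        simp only [hp]
        norm_num
        linarith
    · intro ε
      rw [Fintype.sum_bool]
      cases ε <;>
      · ext i j
        fin_cases i <;> fin_cases j <;>
          simp [binObs, blochOp, pauliX, pauliY, pauliZ, Matrix.one_apply] <;>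
          push_cast <;> ring
    · intro δ
      rw [Fintype.sum_bool]
      cases δ <;>
      · ext i j
        fin_cases i <;> fin_cases j <;>
          simp [binObs, blochOp, pauliX, pauliY, pauliZ, Matrix.one_apply] <;>
          push_cast <;> ring
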